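/- Let H be a Hermitian n×n matrix, W a Hermitian matrix with ‖W‖ ≤ ε, and L, R arbitrary matrices with ‖L‖ ≤ 2 and ‖R‖ ≤ 2. Then the k-th largest singular value of A = L·exp(−H + W)·R satisfies s_k(A) ≤ 4·e^{ε}·e^{−E_k}, where E_k is the k-th smallest eigenvalue of H. -/

import Mathlib

open scoped Matrix.Norms.L2Operator
open Matrix Finset Submodule Module

/-- The singular values of a square complex matrix, in decreasing order. -/
noncomputable def svalsDesc {n : ℕ} (A : Matrix (Fin n) (Fin n) ℂ) : Fin n → ℝ := fun k =>
  Real.sqrt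
    (((Matrix.isHermitian_conjTranspose_mul_self A).eigenvalues ∘
        Tuple.sort (Matrix.isHermitian_conjTranspose_mul_self A).eigenvalues) k.rev)

namespace StmtAux

variable {n : ℕ}

/-! ### exp of a Hermitian matrix on eigenvectors -/

lemma exp_mulVec_eigenvectorBasis {B : Matrix (Fin n) (Fin n) ℂ} (hB : B.IsHermitian) (i : Fin n) :
    NormedSpace.exp B *ᵥ ⇑(hB.eigenvectorBasis i) =
      (Real.exp (hB.eigenvalues i) : ℂ) • ⇑(hB.eigenvectorBasis i) := by
  have hUU : star (hB.eigenvectorUnitary : Matrix (Fin n) (Fin n) ℂ) * hB.eigenvectorUnitary = 1 :=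
    Unitary.coe_star_mul_self hB.eigenvectorUnitary
  have hUU' : (hB.eigenvectorUnitary : Matrix (Fin n) (Fin n) ℂ) *
      star (hB.eigenvectorUnitary : Matrix (Fin n) (Fin n) ℂ) = 1 :=
    Matrix.mem_unitaryGroup_iff.mp hB.eigenvectorUnitary.2
  have hUnit : IsUnit (hB.eigenvectorUnitary : Matrix (Fin n) (Fin n) ℂ) :=
    ⟨⟨_, _, hUU', hUU⟩, rfl⟩
  have hinv : (hB.eigenvectorUnitary : Matrix (Fin n) (Fin n) ℂ)⁻¹
      = star (hB.eigenvectorUnitary : Matrix (Fin n) (Fin n) ℂ) :=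
    inv_eq_left_inv hUU
  have key := Matrix.exp_conj (hB.eigenvectorUnitary : Matrix (Fin n) (Fin n) ℂ)
    (Matrix.diagonal (RCLike.ofReal ∘ hB.eigenvalues)) hUnit
  rw [hinv] at key
  have hdiag : NormedSpace.exp (Matrix.diagonal (RCLike.ofReal ∘ hB.eigenvalues) :
      Matrix (Fin n) (Fin n) ℂ) = Matrix.diagonal (fun j => Complex.exp (hB.eigenvalues j)) := by
    rw [Matrix.exp_diagonal]
    have hfun : (NormedSpace.exp (RCLike.ofReal ∘ hB.eigenvalues) : Fin n → ℂ)
        = fun j => Complex.exp (hB.eigenvalues j) := by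
      funext j
      rw [Pi.coe_exp, Function.comp_apply, ← Complex.exp_eq_exp_ℂ]
      rfl
    rw [hfun]
  have hexp : NormedSpace.exp B =
      (hB.eigenvectorUnitary : Matrix (Fin n) (Fin n) ℂ) *
        Matrix.diagonal (fun j => Complex.exp (hB.eigenvalues j)) *
        star (hB.eigenvectorUnitary : Matrix (Fin n) (Fin n) ℂ) := by
    conv_lhs => rw [hB.spectral_theorem]
    rw [← hdiag]
    exact key
  rw [hexp, ← Matrix.mulVec_mulVec, ← Matrix.mulVec_mulVec, hB.star_eigenvectorUnitary_mulVec,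
    Matrix.diagonal_mulVec_single]
  have h2 : (Pi.single i (Complex.exp (hB.eigenvalues i) * 1) : Fin n → ℂ)
      = Complex.exp (hB.eigenvalues i) • (Pi.single i 1 : Fin n → ℂ) := by
    funext j
    by_cases h : j = i <;> simp [Pi.single_apply, h]
  rw [h2, Matrix.mulVec_smul, hB.eigenvectorUnitary_mulVec]
  simp [Complex.ofReal_exp]

/-! ### Sorted eigenvalues and sorted eigenbasis -/

variable {P : Matrix (Fin n) (Fin n) ℂ}

/-- sorted eigenvalues (increasing) -/
noncomputable def sEig (hP : P.IsHermitian) : Fin n → ℝ :=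
  hP.eigenvalues ∘ Tuple.sort hP.eigenvalues

lemma sEig_mono (hP : P.IsHermitian) : Monotone (sEig hP) :=
  Tuple.monotone_sort _

/-- eigenbasis sorted to match `sEig` -/
noncomputable def sBasis (hP : P.IsHermitian) :
    OrthonormalBasis (Fin n) ℂ (EuclideanSpace ℂ (Fin n)) :=
  hP.eigenvectorBasis.reindex (Tuple.sort hP.eigenvalues).symm

lemma sBasis_apply (hP : P.IsHermitian) (i : Fin n) :
    sBasis hP i = hP.eigenvectorBasis (Tuple.sort hP.eigenvalues i) := by
  simp [sBasis, OrthonormalBasis.reindex_apply]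

lemma mulVec_sBasis (hP : P.IsHermitian) (i : Fin n) :
    P *ᵥ ⇑(sBasis hP i) = (sEig hP i : ℂ) • ⇑(sBasis hP i) := by
  rw [sBasis_apply, hP.mulVec_eigenvectorBasis]
  funext j
  simp [sEig, Complex.real_smul]

lemma exp_mulVec_sBasis {B : Matrix (Fin n) (Fin n) ℂ} (hB : B.IsHermitian) (i : Fin n) :
    NormedSpace.exp B *ᵥ ⇑(sBasis hB i) = ((Real.exp (sEig hB i) : ℝ) : ℂ) • ⇑(sBasis hB i) := by
  rw [sBasis_apply]
  exact exp_mulVec_eigenvectorBasis hB _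

/-! ### Quadratic forms via an orthonormal basis of eigenvectors -/

section onb

variable (sb : OrthonormalBasis (Fin n) ℂ (EuclideanSpace ℂ (Fin n)))

lemma norm_sq_eq_sum_repr (x : EuclideanSpace ℂ (Fin n)) :
    ‖x‖ ^ 2 = ∑ i, ‖sb.repr x i‖ ^ 2 := by
  rw [← sb.repr.norm_map x, EuclideanSpace.norm_eq, Real.sq_sqrt (by positivity)]

variable {Q : Matrix (Fin n) (Fin n) ℂ} {f : Fin n → ℝ}

lemma toEuclideanLin_eq_sum (h : ∀ i, Q *ᵥ ⇑(sb i) = (f i : ℂ) • ⇑(sb i))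
    (x : EuclideanSpace ℂ (Fin n)) :
    Matrix.toEuclideanLin Q x = ∑ i, ((f i : ℂ) * sb.repr x i) • sb i := by
  have hQ : ∀ j, Matrix.toEuclideanLin Q (sb j) = (f j : ℂ) • sb j := by
    intro j
    apply (WithLp.equiv 2 (Fin n → ℂ)).injective
    simpa [Matrix.toEuclideanLin_apply] using h j
  conv_lhs => rw [← sb.sum_repr x]
  rw [map_sum]
  refine Finset.sum_congr rfl fun j _ => ?_
  rw [_root_.map_smul, hQ j, smul_smul, mul_comm]

lemma repr_toEuclideanLin (h : ∀ i, Q *ᵥ ⇑(sb i) = (f i : ℂ) • ⇑(sb i))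
    (x : EuclideanSpace ℂ (Fin n)) (i : Fin n) :
    sb.repr (Matrix.toEuclideanLin Q x) i = (f i : ℂ) * sb.repr x i := by
  rw [toEuclideanLin_eq_sum sb h x, OrthonormalBasis.repr_apply_apply,
    sb.orthonormal.inner_right_fintype]

lemma re_inner_toEuclideanLin (h : ∀ i, Q *ᵥ ⇑(sb i) = (f i : ℂ) • ⇑(sb i))
    (x : EuclideanSpace ℂ (Fin n)) :
    (inner ℂ (Matrix.toEuclideanLin Q x) x).re = ∑ i, f i * ‖sb.repr x i‖ ^ 2 := by
  rw [← sb.repr.inner_map_map (Matrix.toEuclideanLin Q x) x, PiLp.inner_apply]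
  have : ∀ i, (inner ℂ (sb.repr (Matrix.toEuclideanLin Q x) i) (sb.repr x i))
      = (f i : ℂ) * ((‖sb.repr x i‖ : ℝ) ^ 2 : ℝ) := by
    intro i
    rw [RCLike.inner_apply, repr_toEuclideanLin sb h x i]
    rw [_root_.map_mul, Complex.conj_ofReal, mul_left_comm, RCLike.mul_conj]
    push_cast
    rfl
  rw [Finset.sum_congr rfl fun i _ => this i]
  rw [Complex.re_sum]
  refine Finset.sum_congr rfl fun i _ => ?_
  norm_cast

lemma norm_sq_toEuclideanLin (h : ∀ i, Q *ᵥ ⇑(sb i) = (f i : ℂ) • ⇑(sb i))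
    (x : EuclideanSpace ℂ (Fin n)) :
    ‖Matrix.toEuclideanLin Q x‖ ^ 2 = ∑ i, (f i) ^ 2 * ‖sb.repr x i‖ ^ 2 := by
  rw [norm_sq_eq_sum_repr sb]
  refine Finset.sum_congr rfl fun i _ => ?_
  rw [repr_toEuclideanLin sb h x i, norm_mul, mul_pow, Complex.norm_real,
    Real.norm_eq_abs, sq_abs]

/-! ### spans of sub-families of an orthonormal basis -/

lemma finrank_span_finset (s : Finset (Fin n)) :
    finrank ℂ (span ℂ (Set.range fun t : s => sb t)) = s.card := by
  have h : finrank ℂ (span ℂ (Set.range fun t : s => sb t)) = Fintype.card s :=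
    finrank_span_eq_card ((sb.orthonormal.linearIndependent).comp _ Subtype.val_injective)
  rw [h, Fintype.card_coe]

lemma repr_eq_zero_of_mem_span {s : Finset (Fin n)} {x : EuclideanSpace ℂ (Fin n)}
    (hx : x ∈ span ℂ (Set.range fun t : s => sb t)) {i : Fin n} (hi : i ∉ s) :
    sb.repr x i = 0 := by
  have hle : span ℂ (Set.range fun t : s => sb t) ≤
      LinearMap.ker (innerSL ℂ (sb i)).toLinearMap := by
    rw [span_le]
    rintro y ⟨t, rfl⟩
    simp only [SetLike.mem_coe, LinearMap.mem_ker, ContinuousLinearMap.coe_coe, innerSL_apply_apply]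
    exact sb.orthonormal.2 (fun hit => hi (hit ▸ t.2))
  have := hle hx
  simp only [LinearMap.mem_ker, ContinuousLinearMap.coe_coe, innerSL_apply_apply] at this
  rw [OrthonormalBasis.repr_apply_apply]
  exact this

end onb

/-! ### dimension lemmas -/

lemma finrank_le_finrank_comap (f : EuclideanSpace ℂ (Fin n) →ₗ[ℂ] EuclideanSpace ℂ (Fin n))
    (V : Submodule ℂ (EuclideanSpace ℂ (Fin n))) :
    finrank ℂ V ≤ finrank ℂ (V.comap f) := by
  have h1 := LinearMap.finrank_range_add_finrank_ker (f.domRestrict (V.comap f))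
  rw [LinearMap.range_domRestrict, LinearMap.ker_domRestrict] at h1
  have h2 : (V.comap f).map f = LinearMap.range f ⊓ V := Submodule.map_comap_eq f V
  have hker_le : LinearMap.ker f ≤ V.comap f := by
    intro y hy
    rw [Submodule.mem_comap, LinearMap.mem_ker.mp hy]
    exact V.zero_mem
  have h3 : finrank ℂ ((LinearMap.ker f).comap (V.comap f).subtype) =
      finrank ℂ (LinearMap.ker f) := (Submodule.comapSubtypeEquivOfLe hker_le).finrank_eq
  have h4 := LinearMap.finrank_range_add_finrank_ker f
  have h5 := Submodule.finrank_sup_add_finrank_inf_eq (LinearMap.range f) V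
  have h6 : finrank ℂ (LinearMap.range f ⊔ V : Submodule ℂ (EuclideanSpace ℂ (Fin n))) ≤ n :=
    (Submodule.finrank_le _).trans_eq finrank_euclideanSpace_fin
  have h7 : finrank ℂ (EuclideanSpace ℂ (Fin n)) = n := finrank_euclideanSpace_fin
  rw [h2, h3] at h1
  rw [h7] at h4
  omega

lemma exists_ne_zero_mem_inf {S T : Submodule ℂ (EuclideanSpace ℂ (Fin n))}
    (h : n < finrank ℂ S + finrank ℂ T) :
    ∃ x : EuclideanSpace ℂ (Fin n), x ∈ S ∧ x ∈ T ∧ x ≠ 0 := by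
  have h1 := Submodule.finrank_sup_add_finrank_inf_eq S T
  have h2 : finrank ℂ (S ⊔ T : Submodule ℂ (EuclideanSpace ℂ (Fin n))) ≤ n :=
    (Submodule.finrank_le _).trans_eq finrank_euclideanSpace_fin
  have h3 : 0 < finrank ℂ (S ⊓ T : Submodule ℂ (EuclideanSpace ℂ (Fin n))) := by omega
  obtain ⟨x, hx⟩ := finrank_pos_iff_exists_ne_zero.mp h3
  exact ⟨x, x.2.1, x.2.2, fun h0 => hx (Subtype.ext h0)⟩

/-! ### quadratic form bounds -/

lemma quad_ge (hP : P.IsHermitian) (j : Fin n) (x : EuclideanSpace ℂ (Fin n))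
    (hvan : ∀ i ∉ Finset.Ici j, (sBasis hP).repr x i = 0) :
    sEig hP j * ‖x‖ ^ 2 ≤ (inner ℂ (Matrix.toEuclideanLin P x) x).re := by
  rw [re_inner_toEuclideanLin (sBasis hP) (mulVec_sBasis hP) x, norm_sq_eq_sum_repr (sBasis hP) x,
    Finset.mul_sum]
  refine Finset.sum_le_sum fun i _ => ?_
  by_cases hi : i ∈ Finset.Ici j
  · exact mul_le_mul_of_nonneg_right (sEig_mono hP (Finset.mem_Ici.mp hi)) (by positivity)
  · rw [hvan i hi]
    simp

lemma norm_exp_apply_le {B : Matrix (Fin n) (Fin n) ℂ} (hB : B.IsHermitian) (j : Fin n)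
    (y : EuclideanSpace ℂ (Fin n))
    (hvan : ∀ i ∉ Finset.Iic j, (sBasis hB).repr y i = 0) :
    ‖Matrix.toEuclideanLin (NormedSpace.exp B) y‖ ≤ Real.exp (sEig hB j) * ‖y‖ := by
  have hsq : ‖Matrix.toEuclideanLin (NormedSpace.exp B) y‖ ^ 2
      ≤ (Real.exp (sEig hB j) * ‖y‖) ^ 2 := by
    rw [norm_sq_toEuclideanLin (sBasis hB) (exp_mulVec_sBasis hB) y, mul_pow,
      norm_sq_eq_sum_repr (sBasis hB) y, Finset.mul_sum]
    refine Finset.sum_le_sum fun i _ => ?_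
    by_cases hi : i ∈ Finset.Iic j
    · have hle : Real.exp (sEig hB i) ≤ Real.exp (sEig hB j) :=
        Real.exp_le_exp.mpr (sEig_mono hB (Finset.mem_Iic.mp hi))
      exact mul_le_mul_of_nonneg_right (pow_le_pow_left₀ (Real.exp_pos _).le hle 2) (by positivity)
    · rw [hvan i hi]
      simp
  have h := Real.sqrt_le_sqrt hsq
  rwa [Real.sqrt_sq (norm_nonneg _), Real.sqrt_sq (by positivity)] at h

/-! ### toEuclideanLin algebra -/

lemma toEuclideanLin_mul (A B : Matrix (Fin n) (Fin n) ℂ) (x : EuclideanSpace ℂ (Fin n)) :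
    Matrix.toEuclideanLin (A * B) x = Matrix.toEuclideanLin A (Matrix.toEuclideanLin B x) := by
  apply (WithLp.equiv 2 (Fin n → ℂ)).injective
  simp [Matrix.toEuclideanLin_apply, Matrix.mulVec_mulVec]

lemma re_inner_gram (A : Matrix (Fin n) (Fin n) ℂ) (x : EuclideanSpace ℂ (Fin n)) :
    (inner ℂ (Matrix.toEuclideanLin (Aᴴ * A) x) x).re = ‖Matrix.toEuclideanLin A x‖ ^ 2 := by
  rw [toEuclideanLin_mul, Matrix.toEuclideanLin_conjTranspose_eq_adjoint,
    LinearMap.adjoint_inner_left]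
  rw [← inner_self_eq_norm_sq (𝕜 := ℂ)]
  rfl

lemma norm_toEuclideanLin_apply_le (A : Matrix (Fin n) (Fin n) ℂ) (x : EuclideanSpace ℂ (Fin n)) :
    ‖Matrix.toEuclideanLin A x‖ ≤ ‖A‖ * ‖x‖ :=
  A.l2_opNorm_mulVec x

lemma re_inner_le_opNorm (W : Matrix (Fin n) (Fin n) ℂ) (x : EuclideanSpace ℂ (Fin n)) :
    (inner ℂ (Matrix.toEuclideanLin W x) x).re ≤ ‖W‖ * ‖x‖ ^ 2 := by
  calc (inner ℂ (Matrix.toEuclideanLin W x) x).re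
      ≤ ‖(inner ℂ (Matrix.toEuclideanLin W x) x)‖ := Complex.re_le_norm _
    _ ≤ ‖Matrix.toEuclideanLin W x‖ * ‖x‖ := norm_inner_le_norm _ _
    _ ≤ (‖W‖ * ‖x‖) * ‖x‖ :=
        mul_le_mul_of_nonneg_right (norm_toEuclideanLin_apply_le W x) (norm_nonneg _)
    _ = ‖W‖ * ‖x‖ ^ 2 := by ring

/-! ### the one-sided Courant–Fischer bound -/

lemma exists_test_vec (hP : P.IsHermitian) (j : Fin n)
    (S : Submodule ℂ (EuclideanSpace ℂ (Fin n))) (hS : (j : ℕ) + 1 ≤ finrank ℂ S) :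
    ∃ x : EuclideanSpace ℂ (Fin n), x ∈ S ∧ x ≠ 0 ∧
      sEig hP j * ‖x‖ ^ 2 ≤ (inner ℂ (Matrix.toEuclideanLin P x) x).re := by
  set T := span ℂ (Set.range fun t : (Finset.Ici j : Finset (Fin n)) => sBasis hP t) with hT_def
  have hT : finrank ℂ T = n - (j : ℕ) := by
    rw [hT_def, finrank_span_finset (sBasis hP), Fin.card_Ici]
  have hcap : n < finrank ℂ S + finrank ℂ T := by
    have := j.isLt
    omega
  obtain ⟨x, hxS, hxT, hx0⟩ := exists_ne_zero_mem_inf hcap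
  exact ⟨x, hxS, hx0,
    quad_ge hP j x fun i hi => repr_eq_zero_of_mem_span (sBasis hP) hxT hi⟩

end StmtAux

open StmtAux in
theorem stmt_6 {n : ℕ} (H W L R : Matrix (Fin n) (Fin n) ℂ) (ε : ℝ)
    (hH : H.IsHermitian) (hW : W.IsHermitian) (hWε : ‖W‖ ≤ ε)
    (hL : ‖L‖ ≤ 2) (hR : ‖R‖ ≤ 2) :
    ∀ k : Fin n,
      svalsDesc (L * NormedSpace.exp (-H + W) * R) k ≤
        4 * Real.exp ε *
          Real.exp (-((hH.eigenvalues ∘ Tuple.sort hH.eigenvalues) k)) := by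
  intro k
  have hB : (-H + W).IsHermitian := hH.neg.add hW
  set B : Matrix (Fin n) (Fin n) ℂ := -H + W with hB_def
  set A : Matrix (Fin n) (Fin n) ℂ := L * NormedSpace.exp B * R with hA_def
  set j : Fin n := k.rev with hj_def
  have hjval : (j : ℕ) = n - ((k : ℕ) + 1) := Fin.val_rev k
  have hkn : (k : ℕ) < n := k.isLt
  -- Step 1 : sEig hB j ≤ ε - sEig hH k
  have step1 : sEig hB j ≤ ε - sEig hH k := by
    set S := span ℂ (Set.range fun t : (Finset.Ici k : Finset (Fin n)) => sBasis hH t) with hS_def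
    have hSfin : (j : ℕ) + 1 ≤ finrank ℂ S := by
      rw [hS_def, finrank_span_finset (sBasis hH), Fin.card_Ici]
      omega
    obtain ⟨x, hxS, hx0, hineq⟩ := exists_test_vec hB j S hSfin
    have hxnorm : 0 < ‖x‖ ^ 2 := by
      have := norm_pos_iff.mpr hx0
      positivity
    have hsplit : (inner ℂ (Matrix.toEuclideanLin B x) x).re
        = (inner ℂ (Matrix.toEuclideanLin W x) x).re
          - (inner ℂ (Matrix.toEuclideanLin H x) x).re := by
      have hBx : Matrix.toEuclideanLin B x
          = - Matrix.toEuclideanLin H x + Matrix.toEuclideanLin W x := by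
        rw [hB_def, map_add, map_neg]
        rfl
      rw [hBx, inner_add_left, inner_neg_left, Complex.add_re, Complex.neg_re]
      ring
    have hHlow : sEig hH k * ‖x‖ ^ 2 ≤ (inner ℂ (Matrix.toEuclideanLin H x) x).re :=
      quad_ge hH k x fun i hi => repr_eq_zero_of_mem_span (sBasis hH) hxS hi
    have hWup : (inner ℂ (Matrix.toEuclideanLin W x) x).re ≤ ε * ‖x‖ ^ 2 :=
      (re_inner_le_opNorm W x).trans (mul_le_mul_of_nonneg_right hWε (by positivity))
    have key : sEig hB j * ‖x‖ ^ 2 ≤ (ε - sEig hH k) * ‖x‖ ^ 2 := by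
      rw [hsplit] at hineq
      nlinarith
    exact le_of_mul_le_mul_right (by linarith [key]) hxnorm
  -- Step 2 : sEig (Gram) j ≤ (4 exp (sEig hB j))^2
  have hG : (Aᴴ * A).IsHermitian := Matrix.isHermitian_conjTranspose_mul_self A
  have step2 : sEig (Matrix.isHermitian_conjTranspose_mul_self A) j
      ≤ (4 * Real.exp (sEig hB j)) ^ 2 := by
    set V := span ℂ (Set.range fun t : (Finset.Iic j : Finset (Fin n)) => sBasis hB t) with hV_def
    set S := V.comap (Matrix.toEuclideanLin R) with hS_def
    have hSfin : (j : ℕ) + 1 ≤ finrank ℂ S := by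
      refine le_trans ?_ (finrank_le_finrank_comap (Matrix.toEuclideanLin R) V)
      rw [hV_def, finrank_span_finset (sBasis hB), Fin.card_Iic]
    obtain ⟨x, hxS, hx0, hineq⟩ :=
      exists_test_vec (Matrix.isHermitian_conjTranspose_mul_self A) j S hSfin
    rw [re_inner_gram A x] at hineq
    have hxnorm : 0 < ‖x‖ ^ 2 := by
      have := norm_pos_iff.mpr hx0
      positivity
    have hRx : Matrix.toEuclideanLin R x ∈ V := Submodule.mem_comap.mp hxS
    have hM : ‖Matrix.toEuclideanLin (NormedSpace.exp B) (Matrix.toEuclideanLin R x)‖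
        ≤ Real.exp (sEig hB j) * ‖Matrix.toEuclideanLin R x‖ :=
      norm_exp_apply_le hB j _ fun i hi => repr_eq_zero_of_mem_span (sBasis hB) hRx hi
    have hR2 : ‖Matrix.toEuclideanLin R x‖ ≤ 2 * ‖x‖ :=
      (norm_toEuclideanLin_apply_le R x).trans
        (mul_le_mul_of_nonneg_right hR (norm_nonneg x))
    have hAsplit : Matrix.toEuclideanLin A x
        = Matrix.toEuclideanLin L
            (Matrix.toEuclideanLin (NormedSpace.exp B) (Matrix.toEuclideanLin R x)) := by
      rw [hA_def, toEuclideanLin_mul, toEuclideanLin_mul]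
    have hAx : ‖Matrix.toEuclideanLin A x‖ ≤ 4 * Real.exp (sEig hB j) * ‖x‖ := by
      rw [hAsplit]
      calc ‖Matrix.toEuclideanLin L
            (Matrix.toEuclideanLin (NormedSpace.exp B) (Matrix.toEuclideanLin R x))‖
          ≤ ‖L‖ * ‖Matrix.toEuclideanLin (NormedSpace.exp B) (Matrix.toEuclideanLin R x)‖ :=
            norm_toEuclideanLin_apply_le L _
        _ ≤ 2 * (Real.exp (sEig hB j) * (2 * ‖x‖)) := by
            have h2 : ‖Matrix.toEuclideanLin (NormedSpace.exp B) (Matrix.toEuclideanLin R x)‖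
                ≤ Real.exp (sEig hB j) * (2 * ‖x‖) :=
              hM.trans (mul_le_mul_of_nonneg_left hR2 (Real.exp_pos _).le)
            have h3 : (0:ℝ) ≤ ‖Matrix.toEuclideanLin (NormedSpace.exp B)
                (Matrix.toEuclideanLin R x)‖ := norm_nonneg _
            nlinarith [norm_nonneg (Matrix.toEuclideanLin L
              (Matrix.toEuclideanLin (NormedSpace.exp B) (Matrix.toEuclideanLin R x)))]
        _ = 4 * Real.exp (sEig hB j) * ‖x‖ := by ring
    have key : sEig (Matrix.isHermitian_conjTranspose_mul_self A) j * ‖x‖ ^ 2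
        ≤ (4 * Real.exp (sEig hB j)) ^ 2 * ‖x‖ ^ 2 := by
      refine hineq.trans ?_
      have h0 : (0:ℝ) ≤ 4 * Real.exp (sEig hB j) * ‖x‖ := by positivity
      calc ‖Matrix.toEuclideanLin A x‖ ^ 2 ≤ (4 * Real.exp (sEig hB j) * ‖x‖) ^ 2 :=
            pow_le_pow_left₀ (norm_nonneg _) hAx 2
        _ = (4 * Real.exp (sEig hB j)) ^ 2 * ‖x‖ ^ 2 := by ring
    exact le_of_mul_le_mul_right key hxnorm
  -- Finish
  have hfin : svalsDesc A k ≤ 4 * Real.exp (sEig hB j) := by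
    have h := Real.sqrt_le_sqrt step2
    rwa [Real.sqrt_sq (by positivity)] at h
  calc svalsDesc A k ≤ 4 * Real.exp (sEig hB j) := hfin
    _ ≤ 4 * Real.exp (ε - sEig hH k) := by
        have := Real.exp_le_exp.mpr step1
        linarith
    _ = 4 * Real.exp ε * Real.exp (-(sEig hH k)) := by
        rw [sub_eq_add_neg, Real.exp_add]
        ring
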